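/- The single-tree interpretation is a surjection from the {∘, 1, D}-terms in variables Σ onto the reduced pointed Σ-labelled rooted trees: for every term t, ⟨t⟩ is a reduced pointed Σ-labelled rooted tree, and every reduced pointed Σ-labelled rooted tree equals ⟨t⟩ for some {∘, 1, D}-term t over Σ. -/

import Mathlib

inductive PreTree (α : Type) : Type
  | node : Bool → List (α × PreTree α) → PreTree α

namespace PreTree

variable {α : Type}

def mark : PreTree α → Bool
  | node b _ => b

def children : PreTree α → List (α × PreTree α)
  | node _ cs => cs

def le : PreTree α → PreTree α → Prop
  | node b₁ c₁, node b₂ c₂ =>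
      (b₂ = true → b₁ = true) ∧
      ∀ q, q ∈ c₂ → ∃ p, p ∈ c₁ ∧ p.1 = q.1 ∧ le p.2 q.2
termination_by _ t₂ => sizeOf t₂
decreasing_by
  have h := List.sizeOf_lt_of_mem ‹q ∈ c₂›
  obtain ⟨qa, qt⟩ := q
  simp at h ⊢
  omega

-- The reduced form of a tree: reduce all child subtrees, then for each
-- label keep only the `≤`-minimal attached subtrees.
open scoped Classical in
noncomputable def reduce : PreTree α → PreTree α
  | node b cs =>
      let cs' : List (α × PreTree α) := cs.attach.map fun p => (p.1.1, reduce p.1.2)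
      node b (cs'.filter fun q =>
        decide (∀ q' ∈ cs', q'.1 = q.1 → le q'.2 q.2 → le q.2 q'.2))
termination_by t => sizeOf t
decreasing_by
  have h := List.sizeOf_lt_of_mem p.2
  obtain ⟨⟨pa, pt⟩, hp⟩ := p
  simp at h ⊢
  omega

/-- A tree is reduced if it equals its reduced form. -/
def Reduced (T : PreTree α) : Prop := reduce T = T

/-- The number of marked (point) vertices of a tree. -/
def markCount : PreTree α → ℕ
  | node b cs => (cond b 1 0) + (cs.attach.map fun p => markCount p.1.2).sum
termination_by t => sizeOf t
decreasing_by
  have h := List.sizeOf_lt_of_mem p.2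
  obtain ⟨⟨pa, pt⟩, hp⟩ := p
  simp at h ⊢
  omega

/-- A pointed tree: exactly one vertex is marked as the point. -/
def Pointed (T : PreTree α) : Prop := markCount T = 1

/-- Remove all point marks. -/
def unmark : PreTree α → PreTree α
  | node _ cs => node false (cs.attach.map fun p => (p.1.1, unmark p.1.2))
termination_by t => sizeOf t
decreasing_by
  have h := List.sizeOf_lt_of_mem p.2
  obtain ⟨⟨pa, pt⟩, hp⟩ := p
  simp at h ⊢
  omega

/-- Graft the tree `S` onto the point of `T` (identifying the point of `T`
with the root of `S`); the marks of `S` determine the new point. -/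
def graft (S : PreTree α) : PreTree α → PreTree α
  | node b cs =>
      if b then node S.mark (cs ++ S.children)
      else node b (cs.attach.map fun p => (p.1.1, graft S p.1.2))
termination_by t => sizeOf t
decreasing_by
  have h := List.sizeOf_lt_of_mem p.2
  obtain ⟨⟨pa, pt⟩, hp⟩ := p
  simp at h ⊢
  omega

/-- Move the point of `T` to its root. -/
def pointAtRoot (T : PreTree α) : PreTree α := node true (unmark T).children

/-- Pointed tree concatenation `T ∘ S`. -/
noncomputable def concat (T S : PreTree α) : PreTree α := reduce (graft S T)

/-- The domain operation `D(T)` on pointed trees. -/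
noncomputable def domTree (T : PreTree α) : PreTree α := reduce (pointAtRoot T)

/-- The trivial pointed tree: one vertex, both root and point. -/
def trivialTree : PreTree α := node true []

/-- The two-vertex pointed tree with a single `a`-labelled edge, point at the child. -/
def arrow (a : α) : PreTree α := node false [(a, node true [])]


/-- Set-theoretic equality of trees (children lists regarded as sets). -/
def eqv : PreTree α → PreTree α → Prop
  | node b₁ c₁, node b₂ c₂ =>
      b₁ = b₂ ∧
      (∀ p, p ∈ c₁ → ∃ q, q ∈ c₂ ∧ p.1 = q.1 ∧ eqv p.2 q.2) ∧
      (∀ q, q ∈ c₂ → ∃ p : {x // x ∈ c₁}, p.1.1 = q.1 ∧ eqv p.1.2 q.2)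
termination_by t₁ _ => sizeOf t₁
decreasing_by
  · have h₁ := List.sizeOf_lt_of_mem ‹p ∈ c₁›
    obtain ⟨pa, pt⟩ := p
    simp at h₁ ⊢
    omega
  · have h₁ := List.sizeOf_lt_of_mem p.2
    obtain ⟨⟨pa, pt⟩, hp⟩ := p
    simp at h₁ ⊢
    omega


/-- The subtree of `T` at position `p` (a list of child indices), if it exists. -/
def subAt : List ℕ → PreTree α → Option (PreTree α)
  | [], t => some t
  | i :: is, node _ cs => (cs[i]?).bind fun p => subAt is p.2

/-- `p` is a vertex of `T`. -/
def IsVertex (T : PreTree α) (p : List ℕ) : Prop := ∃ t, subAt p T = some t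

/-- The vertex `p` of `T` is the point (is marked). -/
def IsPoint (T : PreTree α) (p : List ℕ) : Prop :=
  ∃ t, subAt p T = some t ∧ t.mark = true

/-- There is an `a`-labelled edge of `T` from vertex `p` (the parent) to
vertex `q` (the child). -/
def Edge (T : PreTree α) (a : α) (p q : List ℕ) : Prop :=
  ∃ c, subAt p T = some c ∧ ∃ i t, c.children[i]? = some (a, t) ∧ q = p ++ [i]

theorem root_isVertex (T : PreTree α) : IsVertex T [] := ⟨T, rfl⟩

/-- A homomorphism of pointed labelled rooted trees from `S` to `T`:
a map of vertices preserving the labelled edge relations, sending the root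
to the root and points to points. -/
def HomTree (S T : PreTree α) : Prop :=
  ∃ θ : List ℕ → List ℕ,
    θ [] = [] ∧
    (∀ p, IsVertex S p → IsVertex T (θ p)) ∧
    (∀ a p q, Edge S a p q → Edge T a (θ p) (θ q)) ∧
    (∀ p, IsPoint S p → IsPoint T (θ p))

/-- A homomorphism of the pointed tree `T`, viewed as a relational structure,
into the relational structure `(X, f)`, mapping the root of `T` to `x` and
the point of `T` to `y`. -/
def HomInto {X : Type} (T : PreTree α) (f : α → X → X → Prop) (x y : X) : Prop :=
  ∃ θ : List ℕ → X,
    θ [] = x ∧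
    (∀ a p q, Edge T a p q → f a (θ p) (θ q)) ∧
    (∀ p, IsPoint T p → θ p = y)


end PreTree

namespace FreeKAD

/-- Terms of the signature `{∘, 1, D}`. -/
inductive Term1 (α : Type) : Type
  | var : α → Term1 α
  | one : Term1 α
  | comp : Term1 α → Term1 α → Term1 α
  | dom : Term1 α → Term1 α

/-- Terms of the signature `{∘, +, *, 0, 1, D}` (Kleene algebra with domain). -/
inductive TermK (α : Type) : Type
  | var : α → TermK α
  | zero : TermK α
  | one : TermK α
  | comp : TermK α → TermK α → TermK α
  | add : TermK α → TermK α → TermK α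
  | star : TermK α → TermK α
  | dom : TermK α → TermK α

variable {α : Type}

/-- The relational interpretation of a `{∘, 1, D}`-term over a set `X`,
under an assignment `f` of binary relations on `X` to the variables. -/
def rinterp1 {X : Type} (f : α → X → X → Prop) : Term1 α → X → X → Prop
  | .var a => f a
  | .one => fun x y => x = y
  | .comp s t => fun x y => ∃ z, rinterp1 f s x z ∧ rinterp1 f t z y
  | .dom s => fun x y => x = y ∧ ∃ z, rinterp1 f s x z

/-- The relational interpretation of a `{∘, +, *, 0, 1, D}`-term over a set `X`,
under an assignment `f` of binary relations on `X` to the variables. -/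
def rinterpK {X : Type} (f : α → X → X → Prop) : TermK α → X → X → Prop
  | .var a => f a
  | .zero => fun _ _ => False
  | .one => fun x y => x = y
  | .comp s t => fun x y => ∃ z, rinterpK f s x z ∧ rinterpK f t z y
  | .add s t => fun x y => rinterpK f s x y ∨ rinterpK f t x y
  | .star s => Relation.ReflTransGen (rinterpK f s)
  | .dom s => fun x y => x = y ∧ ∃ z, rinterpK f s x z

/-- Composition of binary relations. -/
def relComp {X : Type} (R S : X → X → Prop) : X → X → Prop :=
  fun x y => ∃ z, R x z ∧ S z y

/-- Union of binary relations. -/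
def relUnion {X : Type} (R S : X → X → Prop) : X → X → Prop :=
  fun x y => R x y ∨ S x y

/-- The domain operation on binary relations. -/
def relDom {X : Type} (R : X → X → Prop) : X → X → Prop :=
  fun x y => x = y ∧ ∃ z, R x z

/-- The identity relation. -/
def relId {X : Type} : X → X → Prop := fun x y => x = y

/-- The empty relation. -/
def relEmpty {X : Type} : X → X → Prop := fun _ _ => False

end FreeKAD

namespace FreeKAD

open PreTree

variable {α : Type}

/-- The single-tree interpretation of `{∘, 1, D}`-terms. -/
noncomputable def interp1 : Term1 α → PreTree α
  | .var a => arrow a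
  | .one => trivialTree
  | .comp s t => concat (interp1 s) (interp1 t)
  | .dom s => domTree (interp1 s)

/-- The set of `≤`-maximal elements of a set of trees. -/
def maximalSet (K : Set (PreTree α)) : Set (PreTree α) :=
  {T | T ∈ K ∧ ∀ S ∈ K, le T S → le S T}

/-- Elementwise lifting of pointed tree concatenation to sets of trees. -/
def liftComp (K L : Set (PreTree α)) : Set (PreTree α) :=
  {U | ∃ T ∈ K, ∃ S ∈ L, U = concat T S}

/-- Elementwise lifting of the domain operation to sets of trees. -/
def liftDom (K : Set (PreTree α)) : Set (PreTree α) :=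
  {U | ∃ T ∈ K, U = domTree T}

/-- Iterated lifted concatenation: `K^0 = {trivial}`, `K^(i+1) = K^i ∘ K`. -/
def powC (K : Set (PreTree α)) : ℕ → Set (PreTree α)
  | 0 => {trivialTree}
  | i + 1 => liftComp (powC K i) K

/-- The standard tree interpretation of `{∘, +, *, 0, 1, D}`-terms. -/
def sinterp : TermK α → Set (PreTree α)
  | .var a => {arrow a}
  | .zero => ∅
  | .one => {trivialTree}
  | .comp s t => maximalSet (liftComp (sinterp s) (sinterp t))
  | .add s t => maximalSet (sinterp s ∪ sinterp t)
  | .star s => maximalSet (⋃ i : ℕ, powC (sinterp s) (i + 1))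
  | .dom s => maximalSet (liftDom (sinterp s))

/-- Equality of sets of trees, with trees compared as (hereditarily finite) sets. -/
def SetEqv (K L : Set (PreTree α)) : Prop :=
  (∀ T ∈ K, ∃ S ∈ L, eqv T S) ∧ (∀ S ∈ L, ∃ T ∈ K, eqv T S)

/-- A set of reduced pointed trees is regular if it is the standard tree
interpretation of some `{∘, +, *, 0, 1, D}`-term. -/
def Regular (L : Set (PreTree α)) : Prop := ∃ t : TermK α, L = sinterp t

/-- The set of reduced trees lying `≤`-below some member of `L`. -/
def down (L : Set (PreTree α)) : Set (PreTree α) :=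
  {T | Reduced T ∧ ∃ S ∈ L, le T S}

end FreeKAD


namespace PreTree

variable {α : Type}

/-- Strong induction principle for `PreTree`. -/
theorem ind' {motive : PreTree α → Prop}
    (h : ∀ b cs, (∀ p ∈ cs, motive p.2) → motive (node b cs)) :
    ∀ T, motive T := by
  have key : ∀ n (T : PreTree α), sizeOf T ≤ n → motive T := by
    intro n
    induction n with
    | zero =>
      rintro ⟨b, cs⟩ hT
      simp at hT
    | succ n ih =>
      rintro ⟨b, cs⟩ hT
      apply h
      intro p hp
      apply ih
      have h1 := List.sizeOf_lt_of_mem hp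
      obtain ⟨pa, pt⟩ := p
      simp at h1 hT ⊢
      omega
  exact fun T => key (sizeOf T) T le_rfl

theorem le_node_iff {b₁ b₂ : Bool} {c₁ c₂ : List (α × PreTree α)} :
    le (node b₁ c₁) (node b₂ c₂) ↔
      (b₂ = true → b₁ = true) ∧
      ∀ q ∈ c₂, ∃ p ∈ c₁, p.1 = q.1 ∧ le p.2 q.2 := by
  rw [le]

theorem le_refl : ∀ T : PreTree α, le T T := by
  apply ind'
  intro b cs ih
  rw [le_node_iff]
  exact ⟨fun h => h, fun q hq => ⟨q, hq, rfl, ih q hq⟩⟩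

theorem le_trans : ∀ T S U : PreTree α, le T S → le S U → le T U := by
  have : ∀ T : PreTree α, ∀ S U, le T S → le S U → le T U := by
    apply ind'
    rintro b₁ c₁ ih ⟨b₂, c₂⟩ ⟨b₃, c₃⟩ h12 h23
    rw [le_node_iff] at h12 h23 ⊢
    refine ⟨fun h => h12.1 (h23.1 h), fun q hq => ?_⟩
    obtain ⟨m, hm, hm1, hm2⟩ := h23.2 q hq
    obtain ⟨p, hp, hp1, hp2⟩ := h12.2 m hm
    exact ⟨p, hp, hp1.trans hm1, ih p hp _ _ hp2 hm2⟩
  exact this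

/-- Matching of children lists up to `eqv`. -/
def Match (c d : List (α × PreTree α)) : Prop :=
  (∀ p ∈ c, ∃ q ∈ d, p.1 = q.1 ∧ eqv p.2 q.2) ∧
  (∀ q ∈ d, ∃ p ∈ c, p.1 = q.1 ∧ eqv p.2 q.2)

theorem eqv_node_iff {b₁ b₂ : Bool} {c₁ c₂ : List (α × PreTree α)} :
    eqv (node b₁ c₁) (node b₂ c₂) ↔ b₁ = b₂ ∧ Match c₁ c₂ := by
  rw [eqv]
  unfold Match
  constructor
  · rintro ⟨h1, h2, h3⟩
    refine ⟨h1, h2, fun q hq => ?_⟩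
    obtain ⟨⟨p, hp⟩, h4, h5⟩ := h3 q hq
    exact ⟨p, hp, h4, h5⟩
  · rintro ⟨h1, h2, h3⟩
    refine ⟨h1, h2, fun q hq => ?_⟩
    obtain ⟨p, hp, h4, h5⟩ := h3 q hq
    exact ⟨⟨p, hp⟩, h4, h5⟩

theorem eqv_refl : ∀ T : PreTree α, eqv T T := by
  apply ind'
  intro b cs ih
  rw [eqv_node_iff]
  exact ⟨rfl, fun p hp => ⟨p, hp, rfl, ih p hp⟩, fun p hp => ⟨p, hp, rfl, ih p hp⟩⟩

theorem eqv_symm : ∀ T S : PreTree α, eqv T S → eqv S T := by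
  have : ∀ T : PreTree α, ∀ S, eqv T S → eqv S T := by
    apply ind'
    rintro b₁ c₁ ih ⟨b₂, c₂⟩ h
    rw [eqv_node_iff] at h ⊢
    obtain ⟨h1, h2, h3⟩ := h
    refine ⟨h1.symm, fun q hq => ?_, fun p hp => ?_⟩
    · obtain ⟨p, hp, h4, h5⟩ := h3 q hq
      exact ⟨p, hp, h4.symm, ih p hp _ h5⟩
    · obtain ⟨q, hq, h4, h5⟩ := h2 p hp
      exact ⟨q, hq, h4.symm, ih p hp _ h5⟩
  exact this

theorem le_of_eqv : ∀ T S : PreTree α, eqv T S → le T S := by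
  have : ∀ T : PreTree α, ∀ S, eqv T S → le T S := by
    apply ind'
    rintro b₁ c₁ ih ⟨b₂, c₂⟩ h
    rw [eqv_node_iff] at h
    obtain ⟨h1, _, h3⟩ := h
    rw [le_node_iff]
    refine ⟨fun h => h1 ▸ h, fun q hq => ?_⟩
    obtain ⟨p, hp, h4, h5⟩ := h3 q hq
    exact ⟨p, hp, h4, ih p hp _ h5⟩
  exact this

theorem le_of_eqv' (T S : PreTree α) (h : eqv T S) : le S T :=
  le_of_eqv _ _ (eqv_symm _ _ h)

theorem eqv_trans : ∀ T S U : PreTree α, eqv T S → eqv S U → eqv T U := by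
  have : ∀ T : PreTree α, ∀ S U, eqv T S → eqv S U → eqv T U := by
    apply ind'
    rintro b₁ c₁ ih ⟨b₂, c₂⟩ ⟨b₃, c₃⟩ h12 h23
    rw [eqv_node_iff] at h12 h23 ⊢
    refine ⟨h12.1.trans h23.1, fun p hp => ?_, fun r hr => ?_⟩
    · obtain ⟨q, hq, h4, h5⟩ := h12.2.1 p hp
      obtain ⟨r, hr, h6, h7⟩ := h23.2.1 q hq
      exact ⟨r, hr, h4.trans h6, ih p hp _ _ h5 h7⟩
    · obtain ⟨q, hq, h4, h5⟩ := h23.2.2 r hr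
      obtain ⟨p, hp, h6, h7⟩ := h12.2.2 q hq
      exact ⟨p, hp, h6.trans h4, ih p hp _ _ h7 h5⟩
  exact this

end PreTree

namespace PreTree

variable {α : Type}

theorem attach_map' {β : Type _} (l : List (α × PreTree α)) (f : α × PreTree α → β) :
    (l.attach.map fun p => f p.1) = l.map f :=
  List.attach_map_val

/-- Children after the first phase of reduction. -/
noncomputable def redL (cs : List (α × PreTree α)) : List (α × PreTree α) :=
  cs.map fun p => (p.1, reduce p.2)

open scoped Classical in
/-- The minimality filter. -/
noncomputable def minF (l : List (α × PreTree α)) : List (α × PreTree α) :=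
  l.filter fun q => decide (∀ q' ∈ l, q'.1 = q.1 → le q'.2 q.2 → le q.2 q'.2)

theorem reduce_node (b : Bool) (cs : List (α × PreTree α)) :
    reduce (node b cs) = node b (minF (redL cs)) := by
  rw [reduce]
  rw [minF, redL]
  congr 1
  rw [← attach_map' cs (fun p => (p.1, reduce p.2))]

theorem mem_minF {l : List (α × PreTree α)} {q : α × PreTree α} :
    q ∈ minF l ↔ q ∈ l ∧ ∀ q' ∈ l, q'.1 = q.1 → le q'.2 q.2 → le q.2 q'.2 := by
  rw [minF, List.mem_filter]
  simp only [decide_eq_true_eq]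

theorem minF_sublist (l : List (α × PreTree α)) : (minF l).Sublist l :=
  List.filter_sublist

theorem minF_eq_self {l : List (α × PreTree α)}
    (h : ∀ q ∈ l, ∀ q' ∈ l, q'.1 = q.1 → le q'.2 q.2 → le q.2 q'.2) :
    minF l = l := by
  rw [minF]
  apply List.filter_eq_self.mpr
  intro q hq
  simp only [decide_eq_true_eq]
  exact h q hq

theorem reduced_of (b : Bool) (cs : List (α × PreTree α))
    (h1 : ∀ p ∈ cs, Reduced p.2)
    (h2 : ∀ q ∈ cs, ∀ q' ∈ cs, q'.1 = q.1 → le q'.2 q.2 → le q.2 q'.2) :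
    Reduced (node b cs) := by
  have hr : redL cs = cs := by
    rw [redL]
    conv_rhs => rw [← List.map_id cs]
    apply List.map_congr_left
    rintro ⟨a, t⟩ hp
    have ht := h1 ⟨a, t⟩ hp
    rw [Reduced] at ht
    rw [id_eq, ht]
  rw [Reduced, reduce_node, hr, minF_eq_self h2]

theorem reduce_idem : ∀ T : PreTree α, Reduced (reduce T) := by
  apply ind'
  intro b cs ih
  rw [reduce_node]
  apply reduced_of
  · intro p hp
    have hp' := (minF_sublist _).mem hp
    rw [redL, List.mem_map] at hp'
    obtain ⟨x, hx, rfl⟩ := hp'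
    exact ih x hx
  · intro q hq q' hq'
    rw [mem_minF] at hq
    exact hq.2 q' ((minF_sublist _).mem hq')

theorem reduced_children {b : Bool} {cs : List (α × PreTree α)}
    (h : Reduced (node b cs)) : ∀ p ∈ cs, Reduced p.2 := by
  intro p hp
  rw [Reduced, reduce_node] at h
  injection h with _ h
  rw [← h] at hp
  have hp' := (minF_sublist _).mem hp
  rw [redL, List.mem_map] at hp'
  obtain ⟨x, _, rfl⟩ := hp'
  exact reduce_idem x.2

theorem reduced_minimal {b : Bool} {cs : List (α × PreTree α)}
    (h : Reduced (node b cs)) :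
    ∀ q ∈ cs, ∀ q' ∈ cs, q'.1 = q.1 → le q'.2 q.2 → le q.2 q'.2 := by
  have h1 := reduced_children h
  have hr : redL cs = cs := by
    rw [redL]
    conv_rhs => rw [← List.map_id cs]
    apply List.map_congr_left
    rintro ⟨a, t⟩ hp
    have ht := h1 ⟨a, t⟩ hp
    rw [Reduced] at ht
    rw [id_eq, ht]
  rw [Reduced, reduce_node, hr] at h
  injection h with _ h
  intro q hq
  have := List.filter_eq_self.mp h q hq
  simp only [decide_eq_true_eq] at this
  exact this

end PreTree

namespace PreTree

variable {α : Type}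

theorem eqv_reduce : ∀ T S : PreTree α, eqv T S → eqv (reduce T) (reduce S) := by
  have : ∀ T : PreTree α, ∀ S, eqv T S → eqv (reduce T) (reduce S) := by
    apply ind'
    rintro b₁ c₁ ih ⟨b₂, c₂⟩ h
    rw [eqv_node_iff] at h
    obtain ⟨hb, M1, M2⟩ := h
    rw [reduce_node, reduce_node, eqv_node_iff]
    refine ⟨hb, ?_, ?_⟩
    · -- direction 1
      intro r hr
      rw [mem_minF] at hr
      obtain ⟨hr1, hr2⟩ := hr
      rw [redL, List.mem_map] at hr1
      obtain ⟨p, hp, rfl⟩ := hr1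
      obtain ⟨q, hq, hlab, heq⟩ := M1 p hp
      have e : eqv (reduce p.2) (reduce q.2) := ih p hp _ heq
      refine ⟨(q.1, reduce q.2), ?_, hlab, e⟩
      rw [mem_minF]
      refine ⟨List.mem_map.mpr ⟨q, hq, rfl⟩, ?_⟩
      intro s' hs' hlab' hle'
      rw [redL, List.mem_map] at hs'
      obtain ⟨q', hq', rfl⟩ := hs'
      obtain ⟨p', hp', hlab2, heq2⟩ := M2 q' hq'
      have e' : eqv (reduce p'.2) (reduce q'.2) := ih p' hp' _ heq2
      have h1 : le (reduce p'.2) (reduce p.2) :=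
        le_trans _ _ _ (le_of_eqv _ _ e') (le_trans _ _ _ hle' (le_of_eqv' _ _ e))
      have h2 := hr2 (p'.1, reduce p'.2) (List.mem_map.mpr ⟨p', hp', rfl⟩)
        (show p'.1 = p.1 from hlab2.trans ((show q'.1 = q.1 from hlab').trans hlab.symm)) h1
      exact le_trans _ _ _ (le_of_eqv' _ _ e) (le_trans _ _ _ h2 (le_of_eqv _ _ e'))
    · -- direction 2
      intro s hs
      rw [mem_minF] at hs
      obtain ⟨hs1, hs2⟩ := hs
      rw [redL, List.mem_map] at hs1
      obtain ⟨q, hq, rfl⟩ := hs1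
      obtain ⟨p, hp, hlab, heq⟩ := M2 q hq
      have e : eqv (reduce p.2) (reduce q.2) := ih p hp _ heq
      refine ⟨(p.1, reduce p.2), ?_, hlab, e⟩
      rw [mem_minF]
      refine ⟨List.mem_map.mpr ⟨p, hp, rfl⟩, ?_⟩
      intro r' hr' hlab' hle'
      rw [redL, List.mem_map] at hr'
      obtain ⟨p', hp', rfl⟩ := hr'
      obtain ⟨q', hq', hlab2, heq2⟩ := M1 p' hp'
      have e' : eqv (reduce p'.2) (reduce q'.2) := ih p' hp' _ heq2
      have h1 : le (reduce q'.2) (reduce q.2) :=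
        le_trans _ _ _ (le_of_eqv' _ _ e') (le_trans _ _ _ hle' (le_of_eqv _ _ e))
      have h2 := hs2 (q'.1, reduce q'.2) (List.mem_map.mpr ⟨q', hq', rfl⟩)
        (show q'.1 = q.1 from hlab2.symm.trans ((show p'.1 = p.1 from hlab').trans hlab)) h1
      exact le_trans _ _ _ (le_of_eqv _ _ e) (le_trans _ _ _ h2 (le_of_eqv' _ _ e'))
  exact this

theorem markCount_node (b : Bool) (cs : List (α × PreTree α)) :
    markCount (node b cs) = (cond b 1 0) + (cs.map fun p => markCount p.2).sum := by
  rw [markCount]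
  rw [attach_map' cs (fun p => markCount p.2)]

theorem unmark_node (b : Bool) (cs : List (α × PreTree α)) :
    unmark (node b cs) = node false (cs.map fun p => (p.1, unmark p.2)) := by
  rw [unmark]
  rw [attach_map' cs (fun p => (p.1, unmark p.2))]

theorem graft_node (S : PreTree α) (b : Bool) (cs : List (α × PreTree α)) :
    graft S (node b cs) =
      if b then node S.mark (cs ++ S.children)
      else node b (cs.map fun p => (p.1, graft S p.2)) := by
  rw [graft]
  rw [attach_map' cs (fun p => (p.1, graft S p.2))]

theorem markCount_zero_children {b : Bool} {cs : List (α × PreTree α)}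
    (h : markCount (node b cs) = 0) : b = false ∧ ∀ p ∈ cs, markCount p.2 = 0 := by
  rw [markCount_node] at h
  have hb : b = false := by cases b <;> simp_all
  subst hb
  simp only [cond_false, Nat.zero_add] at h
  refine ⟨rfl, fun p hp => ?_⟩
  have := List.sum_eq_zero_iff.mp h (markCount p.2) (List.mem_map.mpr ⟨p, hp, rfl⟩)
  exact this

theorem unmark_eq_self : ∀ T : PreTree α, markCount T = 0 → unmark T = T := by
  apply ind'
  intro b cs ih h
  obtain ⟨hb, hcs⟩ := markCount_zero_children h
  subst hb
  rw [unmark_node]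
  congr 1
  conv_rhs => rw [← List.map_id cs]
  apply List.map_congr_left
  rintro ⟨a, t⟩ hp
  rw [id_eq, ih ⟨a, t⟩ hp (hcs ⟨a, t⟩ hp)]

theorem markCount_unmark : ∀ T : PreTree α, markCount (unmark T) = 0 := by
  apply ind'
  intro b cs ih
  rw [unmark_node, markCount_node]
  simp only [cond_false, Nat.zero_add, List.map_map]
  apply List.sum_eq_zero_iff.mpr
  intro x hx
  rw [List.mem_map] at hx
  obtain ⟨p, hp, rfl⟩ := hx
  exact ih p hp

theorem graft_eq_self (S : PreTree α) : ∀ T : PreTree α, markCount T = 0 → graft S T = T := by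
  apply ind'
  intro b cs ih h
  obtain ⟨hb, hcs⟩ := markCount_zero_children h
  subst hb
  rw [graft_node, if_neg (by simp)]
  congr 1
  conv_rhs => rw [← List.map_id cs]
  apply List.map_congr_left
  rintro ⟨a, t⟩ hp
  rw [id_eq, ih ⟨a, t⟩ hp (hcs ⟨a, t⟩ hp)]

end PreTree

namespace PreTree

variable {α : Type}

theorem sum_sublist_le {l l' : List ℕ} (h : l'.Sublist l) : l'.sum ≤ l.sum := by
  induction h with
  | slnil => exact Nat.le_refl _
  | cons a _ ih => simp only [List.sum_cons]; omega
  | cons_cons a _ ih => simp only [List.sum_cons]; omega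

theorem sum_eq_one_split {β : Type _} {l : List β} {f : β → ℕ}
    (h : (l.map f).sum = 1) :
    ∃ l1 x l2, l = l1 ++ x :: l2 ∧ f x = 1 ∧
      (∀ y ∈ l1, f y = 0) ∧ (∀ y ∈ l2, f y = 0) := by
  induction l with
  | nil => simp at h
  | cons a t ih =>
    rw [List.map_cons, List.sum_cons] at h
    rcases Nat.eq_zero_or_pos (f a) with ha | ha
    · have ht : (t.map f).sum = 1 := by omega
      obtain ⟨l1, x, l2, rfl, hx, h1, h2⟩ := ih ht
      exact ⟨a :: l1, x, l2, rfl, hx, by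
        intro y hy
        rcases List.mem_cons.mp hy with rfl | hy
        · exact ha
        · exact h1 y hy, h2⟩
    · have ha1 : f a = 1 := by omega
      have ht : (t.map f).sum = 0 := by omega
      refine ⟨[], a, t, rfl, ha1, by simp, fun y hy => ?_⟩
      exact List.sum_eq_zero_iff.mp ht (f y) (List.mem_map.mpr ⟨y, hy, rfl⟩)

theorem sum_pos_exists {β : Type _} {l : List β} {f : β → ℕ}
    (h : 1 ≤ (l.map f).sum) : ∃ x ∈ l, 1 ≤ f x := by
  by_contra hc
  push_neg at hc
  have : (l.map f).sum = 0 := by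
    apply List.sum_eq_zero_iff.mpr
    intro x hx
    rw [List.mem_map] at hx
    obtain ⟨y, hy, rfl⟩ := hx
    have := hc y hy
    omega
  omega

theorem le_sum_mem {β : Type _} {l : List β} {f : β → ℕ} {x : β}
    (hx : x ∈ l) : f x ≤ (l.map f).sum :=
  List.le_sum_of_mem (List.mem_map.mpr ⟨x, hx, rfl⟩)

theorem le_markCount : ∀ T S : PreTree α, le T S → 1 ≤ markCount S → 1 ≤ markCount T := by
  have : ∀ T : PreTree α, ∀ S, le T S → 1 ≤ markCount S → 1 ≤ markCount T := by
    apply ind'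
    rintro b₁ c₁ ih ⟨b₂, c₂⟩ hle hS
    rw [le_node_iff] at hle
    rw [markCount_node] at hS ⊢
    cases b₂ with
    | true =>
      rw [hle.1 rfl]
      simp
    | false =>
      simp only [cond_false, Nat.zero_add] at hS
      obtain ⟨q, hq, hq1⟩ := sum_pos_exists hS
      obtain ⟨p, hp, _, hple⟩ := hle.2 q hq
      have h3 := ih p hp q.2 hple hq1
      have h4 : markCount p.2 ≤ (c₁.map fun p => markCount p.2).sum :=
        le_sum_mem (f := fun p => markCount p.2) hp
      omega
  exact this

theorem markCount_reduce_le : ∀ T : PreTree α, markCount (reduce T) ≤ markCount T := by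
  apply ind'
  intro b cs ih
  rw [reduce_node, markCount_node, markCount_node]
  have h1 : ((minF (redL cs)).map fun p => markCount p.2).sum ≤
      ((redL cs).map fun p => markCount p.2).sum :=
    sum_sublist_le (List.Sublist.map _ (minF_sublist _))
  have h2 : ((redL cs).map fun p => markCount p.2).sum ≤
      (cs.map fun p => markCount p.2).sum := by
    rw [redL, List.map_map]
    apply List.sum_le_sum
    intro p hp
    exact ih p hp
  omega

theorem markCount_reduce_one : ∀ T : PreTree α, markCount T = 1 → markCount (reduce T) = 1 := by
  apply ind'
  intro b cs ih hT
  rw [reduce_node, markCount_node]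
  rw [markCount_node] at hT
  have hub : ((minF (redL cs)).map fun p => markCount p.2).sum ≤
      (cs.map fun p => markCount p.2).sum := by
    have h1 : ((minF (redL cs)).map fun p => markCount p.2).sum ≤
        ((redL cs).map fun p => markCount p.2).sum :=
      sum_sublist_le (List.Sublist.map _ (minF_sublist _))
    have h2 : ((redL cs).map fun p => markCount p.2).sum ≤
        (cs.map fun p => markCount p.2).sum := by
      rw [redL, List.map_map]
      apply List.sum_le_sum
      intro p hp
      exact markCount_reduce_le p.2
    omega
  cases b with
  | true =>
    simp only [cond_true] at hT ⊢
    omega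
  | false =>
    simp only [cond_false, Nat.zero_add] at hT ⊢
    obtain ⟨l1, x, l2, hsplit, hx, h1, h2⟩ := sum_eq_one_split hT
    have hxmem : x ∈ cs := by rw [hsplit]; simp
    have huniq : ∀ q ∈ cs, 1 ≤ markCount q.2 → q = x := by
      intro q hq hq1
      rw [hsplit] at hq
      rcases List.mem_append.mp hq with hq | hq
      · have := h1 q hq; omega
      · rcases List.mem_cons.mp hq with rfl | hq
        · rfl
        · have := h2 q hq; omega
    have hr1 : markCount (reduce x.2) = 1 := ih x hxmem hx
    have hrmem : (x.1, reduce x.2) ∈ minF (redL cs) := by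
      rw [mem_minF]
      refine ⟨List.mem_map.mpr ⟨x, hxmem, rfl⟩, ?_⟩
      intro q' hq' _ hle'
      rw [redL, List.mem_map] at hq'
      obtain ⟨q, hq, rfl⟩ := hq'
      have hq1 : 1 ≤ markCount (reduce q.2) :=
        le_markCount _ _ hle' hr1.ge
      have hq2 : 1 ≤ markCount q.2 :=
        Nat.le_trans hq1 (markCount_reduce_le q.2)
      have := huniq q hq hq2
      rw [this]
      exact le_refl _
    have hge : markCount (reduce x.2) ≤
        ((minF (redL cs)).map fun p => markCount p.2).sum :=
      le_sum_mem (f := fun p => markCount p.2) hrmem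
    omega

theorem markCount_graft (S : PreTree α) :
    ∀ T : PreTree α, markCount T = 1 → markCount (graft S T) = markCount S := by
  apply ind'
  intro b cs ih hT
  rw [markCount_node] at hT
  cases b with
  | true =>
    simp only [cond_true] at hT
    have hsum : (cs.map fun p => markCount p.2).sum = 0 := by omega
    rw [graft_node, if_pos rfl]
    obtain ⟨bs, cS⟩ := S
    rw [markCount_node, markCount_node]
    simp only [mark, children, List.map_append, List.sum_append]
    omega
  | false =>
    simp only [cond_false, Nat.zero_add] at hT
    obtain ⟨l1, x, l2, hsplit, hx, h1, h2⟩ := sum_eq_one_split hT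
    rw [graft_node, if_neg (by simp), markCount_node]
    simp only [cond_false, Nat.zero_add, List.map_map, Function.comp_def]
    subst hsplit
    rw [List.map_append, List.map_cons, List.sum_append, List.sum_cons]
    have e1 : ((l1.map fun p => markCount (graft S p.2))).sum = 0 := by
      apply List.sum_eq_zero_iff.mpr
      intro y hy
      rw [List.mem_map] at hy
      obtain ⟨p, hp, rfl⟩ := hy
      rw [graft_eq_self S p.2 (h1 p hp)]
      exact h1 p hp
    have e2 : ((l2.map fun p => markCount (graft S p.2))).sum = 0 := by
      apply List.sum_eq_zero_iff.mpr
      intro y hy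
      rw [List.mem_map] at hy
      obtain ⟨p, hp, rfl⟩ := hy
      rw [graft_eq_self S p.2 (h2 p hp)]
      exact h2 p hp
    have e3 : markCount (graft S x.2) = markCount S :=
      ih x (by simp) hx
    omega

end PreTree

namespace FreeKAD

open PreTree

variable {α : Type}

theorem reduced_trivial : Reduced (trivialTree : PreTree α) := by
  apply reduced_of <;> simp

theorem reduced_arrow (a : α) : Reduced (arrow a) := by
  apply reduced_of
  · rintro p hp
    simp only [List.mem_singleton] at hp
    subst hp
    exact reduced_trivial
  · rintro q hq q' hq' _ h
    simp only [List.mem_singleton] at hq hq'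
    subst hq; subst hq'
    exact h

theorem pointed_trivial : Pointed (trivialTree : PreTree α) := by
  rw [PreTree.Pointed, trivialTree, markCount_node]
  simp

theorem pointed_arrow (a : α) : Pointed (arrow a) := by
  rw [PreTree.Pointed, arrow, markCount_node]
  simp [markCount_node]

theorem markCount_pointAtRoot (T : PreTree α) : markCount (pointAtRoot T) = 1 := by
  obtain ⟨b, cs⟩ := T
  rw [pointAtRoot, unmark_node, children, markCount_node]
  simp only [cond_true, List.map_map, Function.comp_def]
  have : ((cs.map fun p => markCount (unmark p.2))).sum = 0 := by
    apply List.sum_eq_zero_iff.mpr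
    intro y hy
    rw [List.mem_map] at hy
    obtain ⟨p, hp, rfl⟩ := hy
    exact markCount_unmark p.2
  omega

theorem interp1_reduced_pointed (t : Term1 α) :
    (interp1 t).Reduced ∧ (interp1 t).Pointed := by
  induction t with
  | var a => exact ⟨reduced_arrow a, pointed_arrow a⟩
  | one => exact ⟨reduced_trivial, pointed_trivial⟩
  | comp s t ihs iht =>
    constructor
    · exact reduce_idem _
    · rw [PreTree.Pointed]
      rw [interp1, concat]
      apply markCount_reduce_one
      rw [markCount_graft _ _ ihs.2]
      exact iht.2
  | dom s ihs =>
    constructor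
    · exact reduce_idem _
    · rw [PreTree.Pointed, interp1, domTree]
      apply markCount_reduce_one
      exact markCount_pointAtRoot _

end FreeKAD

namespace PreTree

variable {α : Type}

theorem eqv_unmark : ∀ T S : PreTree α, eqv T S → eqv (unmark T) (unmark S) := by
  have : ∀ T : PreTree α, ∀ S, eqv T S → eqv (unmark T) (unmark S) := by
    apply ind'
    rintro b₁ c₁ ih ⟨b₂, c₂⟩ h
    rw [eqv_node_iff] at h
    obtain ⟨hb, M1, M2⟩ := h
    rw [unmark_node, unmark_node, eqv_node_iff]
    refine ⟨rfl, ?_, ?_⟩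
    · intro p hp
      rw [List.mem_map] at hp
      obtain ⟨x, hx, rfl⟩ := hp
      obtain ⟨q, hq, hl, he⟩ := M1 x hx
      exact ⟨(q.1, unmark q.2), List.mem_map.mpr ⟨q, hq, rfl⟩, hl, ih x hx _ he⟩
    · intro q hq
      rw [List.mem_map] at hq
      obtain ⟨y, hy, rfl⟩ := hq
      obtain ⟨x, hx, hl, he⟩ := M2 y hy
      exact ⟨(x.1, unmark x.2), List.mem_map.mpr ⟨x, hx, rfl⟩, hl, ih x hx _ he⟩
  exact this

theorem match_append {c₁ c₂ d₁ d₂ : List (α × PreTree α)}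
    (h1 : Match c₁ d₁) (h2 : Match c₂ d₂) : Match (c₁ ++ c₂) (d₁ ++ d₂) := by
  constructor
  · intro p hp
    rcases List.mem_append.mp hp with hp | hp
    · obtain ⟨q, hq, hl, he⟩ := h1.1 p hp
      exact ⟨q, List.mem_append_left _ hq, hl, he⟩
    · obtain ⟨q, hq, hl, he⟩ := h2.1 p hp
      exact ⟨q, List.mem_append_right _ hq, hl, he⟩
  · intro q hq
    rcases List.mem_append.mp hq with hq | hq
    · obtain ⟨p, hp, hl, he⟩ := h1.2 q hq
      exact ⟨p, List.mem_append_left _ hp, hl, he⟩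
    · obtain ⟨p, hp, hl, he⟩ := h2.2 q hq
      exact ⟨p, List.mem_append_right _ hp, hl, he⟩

theorem node_mark_children (Z : PreTree α) : node Z.mark Z.children = Z := by
  cases Z; rfl

theorem reduced_remark {b b' : Bool} {cs : List (α × PreTree α)}
    (h : Reduced (node b cs)) : Reduced (node b' cs) :=
  reduced_of b' cs (reduced_children h) (reduced_minimal h)

theorem reduced_singleton {b : Bool} (a : α) {Z : PreTree α} (hZ : Reduced Z) :
    Reduced (node b [(a, Z)]) := by
  apply reduced_of
  · rintro p hp
    simp only [List.mem_singleton] at hp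
    subst hp
    exact hZ
  · rintro q hq q' hq' _ h
    simp only [List.mem_singleton] at hq hq'
    subst hq; subst hq'
    exact h

theorem graft_arrow (a : α) (Z : PreTree α) :
    graft Z (arrow a) = node false [(a, Z)] := by
  rw [arrow, graft_node, if_neg (by simp)]
  simp only [List.map_cons, List.map_nil]
  rw [graft_node, if_pos rfl, List.nil_append, node_mark_children]

theorem concat_arrow (a : α) (Z : PreTree α) (hZ : Reduced Z) :
    concat (arrow a) Z = node false [(a, Z)] := by
  rw [concat, graft_arrow]
  exact reduced_singleton a hZ

theorem domTree_singleton (a : α) (Z : PreTree α) :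
    domTree (node false [(a, Z)]) = reduce (node true [(a, unmark Z)]) := by
  rw [domTree, pointAtRoot, unmark_node]
  simp only [List.map_cons, List.map_nil, children]

theorem concat_root (c : List (α × PreTree α)) (G : PreTree α) :
    concat (node true c) G = reduce (node G.mark (c ++ G.children)) := by
  rw [concat, graft_node, if_pos rfl]

end PreTree

namespace FreeKAD

open PreTree

variable {α : Type}

/-- The term corresponding to the tree `node true cs`, children regarded as
unmarked trees. -/
def g : List (α × PreTree α) → Term1 α
  | [] => .one
  | (a, S) :: rest => .comp (.dom (.comp (.var a) (g S.children))) (g rest)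
termination_by l => sizeOf l
decreasing_by
  all_goals first
  | (obtain ⟨b, cs⟩ := S; simp [children]; omega)
  | (obtain ⟨b, cs⟩ := S; simp [children])

/-- Find the (first) marked child, returning the split of the list. -/
def findMarked :
    List (α × PreTree α) → Option (List (α × PreTree α) × (α × PreTree α) × List (α × PreTree α))
  | [] => none
  | p :: rest =>
    if markCount p.2 = 1 then some ([], p, rest)
    else (findMarked rest).map fun w => (p :: w.1, w.2)

theorem findMarked_spec : ∀ (cs : List (α × PreTree α)) l1 p l2,
    findMarked cs = some (l1, p, l2) → cs = l1 ++ p :: l2 ∧ markCount p.2 = 1 := by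
  intro cs
  induction cs with
  | nil => intro l1 p l2 h; simp [findMarked] at h
  | cons q rest ih =>
    intro l1 p l2 h
    rw [findMarked] at h
    split at h
    · rename_i hq
      injection h with h
      simp only [Prod.mk.injEq] at h
      obtain ⟨rfl, rfl, rfl⟩ := h
      exact ⟨rfl, hq⟩
    · rw [Option.map_eq_some_iff] at h
      obtain ⟨⟨w1, wp, w2⟩, hw, h⟩ := h
      simp only [Prod.mk.injEq] at h
      obtain ⟨rfl, rfl, rfl⟩ := h
      obtain ⟨hsplit, hm⟩ := ih _ _ _ hw
      exact ⟨by rw [List.cons_append, ← hsplit], hm⟩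

theorem findMarked_isSome {cs : List (α × PreTree α)} {p : α × PreTree α}
    (hp : p ∈ cs) (hm : markCount p.2 = 1) : ∃ w, findMarked cs = some w := by
  induction cs with
  | nil => simp at hp
  | cons q rest ih =>
    rw [findMarked]
    by_cases hq : markCount q.2 = 1
    · exact ⟨_, if_pos hq⟩
    · rw [if_neg hq]
      rcases List.mem_cons.mp hp with rfl | hp'
      · exact absurd hm hq
      · obtain ⟨w, hw⟩ := ih hp'
        exact ⟨_, by rw [hw]; rfl⟩

/-- The term corresponding to a pointed tree (with fuel). -/
noncomputable def hAux : ℕ → PreTree α → Term1 α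
  | 0, _ => .one
  | n + 1, node b cs =>
    if b then g cs
    else
      match findMarked cs with
      | some (l1, p, l2) => .comp (g (l1 ++ l2)) (.comp (.var p.1) (hAux n p.2))
      | none => .one

end FreeKAD

namespace FreeKAD

open PreTree

variable {α : Type}

theorem sizeOf_children_lt (a : α) (S : PreTree α) (rest : List (α × PreTree α)) :
    sizeOf (children S) < sizeOf ((a, S) :: rest) := by
  obtain ⟨b, cs⟩ := S
  simp [children]
  omega

theorem g_correct : ∀ n (cs : List (α × PreTree α)), sizeOf cs ≤ n →
    Reduced (node true cs) → (∀ p ∈ cs, markCount p.2 = 0) →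
    eqv (interp1 (g cs)) (node true cs) := by
  intro n
  induction n with
  | zero =>
    intro cs h
    exfalso
    cases cs <;> simp at h
  | succ n ih =>
    rintro (_ | ⟨⟨a, S⟩, rest⟩) hsz hred hzero
    · rw [g]
      exact eqv_refl _
    · rw [g]
      have hSmem : (a, S) ∈ (a, S) :: rest := List.mem_cons_self
      have hSred : Reduced S := reduced_children hred _ hSmem
      have hSzero : markCount S = 0 := hzero _ hSmem
      obtain ⟨bS, csS⟩ := S
      obtain ⟨hbS, hcszero⟩ := markCount_zero_children hSzero
      subst hbS
      -- the inner tree Y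
      set Y := interp1 (g (children (node false csS))) with hYdef
      have hY := interp1_reduced_pointed (g (children (node false csS)))
      have hYred : Reduced Y := hY.1
      have IH1 : eqv Y (node true csS) := by
        have h1 : sizeOf (children (node false csS)) ≤ n := by
          have := sizeOf_children_lt a (node false csS) rest
          omega
        have h2 : Reduced (node true csS) := reduced_remark hSred
        exact ih _ h1 h2 hcszero
      -- compute the dom part
      rw [interp1, interp1, interp1, interp1]
      rw [concat_arrow a Y hYred, domTree_singleton]
      have humY : eqv (unmark Y) (node false csS) := by
        have h1 := eqv_unmark _ _ IH1
        rw [unmark_node] at h1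
        have h2 : (csS.map fun p => (p.1, unmark p.2)) = csS := by
          conv_rhs => rw [← List.map_id csS]
          apply List.map_congr_left
          rintro ⟨x, t⟩ hx
          rw [id_eq, unmark_eq_self t (hcszero ⟨x, t⟩ hx)]
        rw [h2] at h1
        exact h1
      have D1eqv : eqv (reduce (node true [(a, unmark Y)])) (node true [(a, node false csS)]) := by
        have h1 : eqv (node true [(a, unmark Y)]) (node true [(a, node false csS)]) := by
          rw [eqv_node_iff]
          refine ⟨rfl, ?_, ?_⟩
          · rintro p hp
            simp only [List.mem_singleton] at hp
            subst hp
            exact ⟨(a, node false csS), List.mem_singleton.mpr rfl, rfl, humY⟩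
          · rintro q hq
            simp only [List.mem_singleton] at hq
            subst hq
            exact ⟨(a, unmark Y), List.mem_singleton.mpr rfl, rfl, humY⟩
        have h2 := eqv_reduce _ _ h1
        have h3 : Reduced (node true [(a, node false csS)]) := reduced_singleton a hSred
        rw [Reduced] at h3
        rw [h3] at h2
        exact h2
      -- the rest part
      have IHrest : eqv (interp1 (g rest)) (node true rest) := by
        have h1 : sizeOf rest ≤ n := by simp at hsz; omega
        have h2 : Reduced (node true rest) := by
          apply reduced_of
          · intro p hp
            exact reduced_children hred _ (List.mem_cons_of_mem _ hp)
          · intro q hq q' hq'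
            exact reduced_minimal hred q (List.mem_cons_of_mem _ hq) q'
              (List.mem_cons_of_mem _ hq')
        exact ih _ h1 h2 (fun p hp => hzero p (List.mem_cons_of_mem _ hp))
      -- take apart the two trees
      rcases hD : reduce (node true [(a, unmark Y)]) with ⟨bD, cD⟩
      rw [hD] at D1eqv
      rcases hG : interp1 (g rest) with ⟨bG, cG⟩
      rw [hG] at IHrest
      rw [eqv_node_iff] at D1eqv IHrest
      obtain ⟨hbD, MD⟩ := D1eqv
      obtain ⟨hbG, MG⟩ := IHrest
      subst hbD; subst hbG
      rw [concat_root]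
      simp only [mark, children]
      have key : eqv (node true (cD ++ cG)) (node true ([(a, node false csS)] ++ rest)) := by
        rw [eqv_node_iff]
        exact ⟨rfl, match_append MD MG⟩
      have h4 := eqv_reduce _ _ key
      have h5 : Reduced (node true ([(a, node false csS)] ++ rest)) := by
        rw [List.singleton_append]
        exact hred
      rw [Reduced] at h5
      rw [h5, List.singleton_append] at h4
      exact h4

end FreeKAD

namespace FreeKAD

open PreTree

variable {α : Type}

theorem hAux_correct : ∀ n (T : PreTree α), sizeOf T ≤ n → T.Reduced → T.Pointed →
    eqv (interp1 (hAux n T)) T := by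
  intro n
  induction n with
  | zero =>
    rintro ⟨b, cs⟩ h
    exfalso
    simp at h
  | succ n ih =>
    rintro ⟨b, cs⟩ hsz hred hpt
    rw [PreTree.Pointed, markCount_node] at hpt
    cases b with
    | true =>
      rw [hAux, if_pos rfl]
      simp only [cond_true] at hpt
      have hzero : ∀ p ∈ cs, markCount p.2 = 0 := by
        have hs0 : (cs.map fun p => markCount p.2).sum = 0 := by omega
        intro p hp
        exact List.sum_eq_zero_iff.mp hs0 _ (List.mem_map.mpr ⟨p, hp, rfl⟩)
      exact g_correct (sizeOf cs) cs le_rfl hred hzero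
    | false =>
      simp only [cond_false, Nat.zero_add] at hpt
      obtain ⟨l1, x, l2, hsplit, hx, h1, h2⟩ := sum_eq_one_split hpt
      have hxmem : x ∈ cs := by rw [hsplit]; simp
      obtain ⟨⟨w1, wp, w2⟩, hw⟩ := findMarked_isSome hxmem hx
      obtain ⟨hwsplit, hwm⟩ := findMarked_spec cs w1 wp w2 hw
      -- unfold hAux
      rw [hAux, if_neg (by simp), hw]
      -- the lists w1, w2 consist of unmarked trees
      have hz : ∀ y ∈ w1 ++ w2, markCount y.2 = 0 := by
        have hsum : ((w1 ++ wp :: w2).map fun p => markCount p.2).sum = 1 := by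
          rw [← hwsplit]; exact hpt
        rw [List.map_append, List.sum_append, List.map_cons, List.sum_cons, hwm] at hsum
        have hs1 : (w1.map fun p => markCount p.2).sum = 0 := by omega
        have hs2 : (w2.map fun p => markCount p.2).sum = 0 := by omega
        intro y hy
        rcases List.mem_append.mp hy with hy | hy
        · exact List.sum_eq_zero_iff.mp hs1 _ (List.mem_map.mpr ⟨y, hy, rfl⟩)
        · exact List.sum_eq_zero_iff.mp hs2 _ (List.mem_map.mpr ⟨y, hy, rfl⟩)
      have hwmem : wp ∈ cs := by rw [hwsplit]; simp
      -- the subterm for the marked child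
      have hHS := interp1_reduced_pointed (hAux n wp.2)
      have HSeqv : eqv (interp1 (hAux n wp.2)) wp.2 := by
        apply ih
        · have h3 := List.sizeOf_lt_of_mem hwmem
          obtain ⟨wa, wt⟩ := wp
          simp at h3 hsz ⊢
          omega
        · exact reduced_children hred _ hwmem
        · exact hwm
      -- the G part
      have hGred : Reduced (node true (w1 ++ w2)) := by
        apply reduced_of
        · intro p hp
          apply reduced_children hred
          rw [hwsplit]
          rcases List.mem_append.mp hp with hp | hp
          · exact List.mem_append_left _ hp
          · exact List.mem_append_right _ (List.mem_cons_of_mem _ hp)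
        · intro q hq q' hq'
          have m1 : q ∈ cs := by
            rw [hwsplit]
            rcases List.mem_append.mp hq with h | h
            · exact List.mem_append_left _ h
            · exact List.mem_append_right _ (List.mem_cons_of_mem _ h)
          have m2 : q' ∈ cs := by
            rw [hwsplit]
            rcases List.mem_append.mp hq' with h | h
            · exact List.mem_append_left _ h
            · exact List.mem_append_right _ (List.mem_cons_of_mem _ h)
          exact reduced_minimal hred q m1 q' m2
      have hGsz : sizeOf (w1 ++ w2) ≤ sizeOf (w1 ++ w2) := le_rfl
      have Geqv : eqv (interp1 (g (w1 ++ w2))) (node true (w1 ++ w2)) :=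
        g_correct _ _ le_rfl hGred hz
      -- assemble
      rw [interp1, interp1, interp1]
      rw [concat_arrow wp.1 _ hHS.1]
      rcases hG : interp1 (g (w1 ++ w2)) with ⟨bG, cG⟩
      rw [hG] at Geqv
      rw [eqv_node_iff] at Geqv
      obtain ⟨hbG, MG⟩ := Geqv
      subst hbG
      rw [concat_root]
      simp only [mark, children]
      have key : eqv (node false (cG ++ [(wp.1, interp1 (hAux n wp.2))])) (node false cs) := by
        rw [eqv_node_iff]
        refine ⟨rfl, ?_, ?_⟩
        · intro p hp
          rcases List.mem_append.mp hp with hp | hp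
          · obtain ⟨q, hq, hl, he⟩ := MG.1 p hp
            refine ⟨q, ?_, hl, he⟩
            rw [hwsplit]
            rcases List.mem_append.mp hq with h | h
            · exact List.mem_append_left _ h
            · exact List.mem_append_right _ (List.mem_cons_of_mem _ h)
          · simp only [List.mem_singleton] at hp
            subst hp
            exact ⟨wp, hwmem, rfl, HSeqv⟩
        · intro q hq
          rw [hwsplit] at hq
          rcases List.mem_append.mp hq with hq | hq
          · obtain ⟨p, hp, hl, he⟩ := MG.2 q (List.mem_append_left _ hq)
            exact ⟨p, List.mem_append_left _ hp, hl, he⟩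
          · rcases List.mem_cons.mp hq with heq | hq
            · exact ⟨(q.1, interp1 (hAux n q.2)),
                List.mem_append_right _ (List.mem_singleton.mpr (by rw [heq])), rfl,
                by rw [heq]; exact HSeqv⟩
            · obtain ⟨p, hp, hl, he⟩ := MG.2 q (List.mem_append_right _ hq)
              exact ⟨p, List.mem_append_left _ hp, hl, he⟩
      have h4 := eqv_reduce _ _ key
      have h5 : Reduced (node false cs) := hred
      rw [Reduced] at h5
      rw [h5] at h4
      exact h4

end FreeKAD

namespace FreeKAD
open PreTree

/-- The single-tree interpretation is a surjection from the
`{∘, 1, D}`-terms in variables `Σ` onto the reduced pointed `Σ`-labelled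
rooted trees: for every term `t`, `⟨t⟩` is a reduced pointed tree, and every
reduced pointed tree equals `⟨t⟩` for some `{∘, 1, D}`-term `t`
(equality of trees, whose children collections are sets, is `eqv`). -/
theorem interp1_surjective {α : Type} :
    (∀ t : Term1 α, (interp1 t).Reduced ∧ (interp1 t).Pointed) ∧
    (∀ T : PreTree α, T.Reduced → T.Pointed →
        ∃ t : Term1 α, eqv (interp1 t) T) := by
  refine ⟨interp1_reduced_pointed, fun T hred hpt => ?_⟩
  exact ⟨hAux (sizeOf T) T, hAux_correct (sizeOf T) T le_rfl hred hpt⟩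

end FreeKAD
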